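/- Let M be a matroid on the Boolean lattice of subsets of a finite set, and let [x, y] be an interval. Then the minor M([x,y]) has exactly one basis if and only if the interval [x,y] is prime-free: it contains no length-2 interval [a, a∪{e,f}] in which both covers from the bottom have weight 1 and both covers to the top have weight 0. -/

import Mathlib

section Aux

variable {α : Type*} [Fintype α] [DecidableEq α]

private lemma aux_step (r : Finset α → ℕ)
    (hr1 : ∀ x : Finset α, r x ≤ x.card)
    (hr3 : ∀ x y : Finset α, r (x ∪ y) + r (x ∩ y) ≤ r x + r y)
    (z : Finset α) (e : α) : r (insert e z) ≤ r z + 1 := by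
  have h := hr3 {e} z
  have h1 : r {e} ≤ 1 := by simpa using hr1 {e}
  have h2 : insert e z = {e} ∪ z := by rw [Finset.insert_eq]
  rw [h2]
  omega

private lemma aux_flat (r : Finset α → ℕ)
    (hr2 : ∀ x y : Finset α, x ⊆ y → r x ≤ r y)
    (hr3 : ∀ x y : Finset α, r (x ∪ y) + r (x ∩ y) ≤ r x + r y) :
    ∀ (s z : Finset α), (∀ e ∈ s, r (insert e z) = r z) → r (z ∪ s) = r z := by
  intro s
  induction s using Finset.induction_on with
  | empty => intro z _; simp
  | @insert e s he ih =>
    intro z hz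
    have hs : r (z ∪ s) = r z := ih z (fun e' he' => hz e' (Finset.mem_insert_of_mem he'))
    have hsub := hr3 (z ∪ s) (insert e z)
    have hu : (z ∪ s) ∪ insert e z = z ∪ insert e s := by
      ext g
      simp only [Finset.mem_union, Finset.mem_insert]
      tauto
    have hi : (z ∪ s) ∩ insert e z = z := by
      ext g
      simp only [Finset.mem_inter, Finset.mem_union, Finset.mem_insert]
      constructor
      · rintro ⟨h1 | h1, rfl | h2⟩
        · exact h1
        · exact h2
        · exact absurd h1 he
        · exact h2
      · intro hg; exact ⟨Or.inl hg, Or.inr hg⟩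
    rw [hu, hi, hz e (Finset.mem_insert_self e s), hs] at hsub
    have hmono : r z ≤ r (z ∪ insert e s) := hr2 _ _ Finset.subset_union_left
    omega

private lemma aux_union_le (r : Finset α → ℕ)
    (hr1 : ∀ x : Finset α, r x ≤ x.card)
    (hr3 : ∀ x y : Finset α, r (x ∪ y) + r (x ∩ y) ≤ r x + r y) :
    ∀ (s z : Finset α), r (z ∪ s) ≤ r z + s.card := by
  intro s
  induction s using Finset.induction_on with
  | empty => intro z; simp
  | @insert e s he ih =>
    intro z
    have h1 : z ∪ insert e s = insert e (z ∪ s) := Finset.union_insert e z s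
    have h2 := aux_step r hr1 hr3 (z ∪ s) e
    have h3 := ih z
    rw [h1, Finset.card_insert_of_notMem he]
    omega

private lemma aux_diff_le (r : Finset α → ℕ)
    (hr1 : ∀ x : Finset α, r x ≤ x.card)
    (hr3 : ∀ x y : Finset α, r (x ∪ y) + r (x ∩ y) ≤ r x + r y)
    (z z' : Finset α) (h : z ⊆ z') : r z' ≤ r z + (z' \ z).card := by
  have h1 := aux_union_le r hr1 hr3 (z' \ z) z
  rwa [Finset.union_sdiff_of_subset h] at h1

private lemma aux_subset_ind (r : Finset α → ℕ)
    (hr1 : ∀ x : Finset α, r x ≤ x.card)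
    (hr3 : ∀ x y : Finset α, r (x ∪ y) + r (x ∩ y) ≤ r x + r y)
    (x w z : Finset α) (hxw : x ⊆ w) (hwz : w ⊆ z)
    (hind : r z + x.card = r x + z.card) : r w + x.card = r x + w.card := by
  have d1 : (z \ w).card + w.card = z.card := Finset.card_sdiff_add_card_eq_card hwz
  have d2 : (w \ x).card + x.card = w.card := Finset.card_sdiff_add_card_eq_card hxw
  have h3 := aux_diff_le r hr1 hr3 w z hwz
  have h4 := aux_diff_le r hr1 hr3 x w hxw
  omega

private lemma aux_extend (r : Finset α → ℕ)
    (hr1 : ∀ x : Finset α, r x ≤ x.card)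
    (hr2 : ∀ x y : Finset α, x ⊆ y → r x ≤ r y)
    (hr3 : ∀ x y : Finset α, r (x ∪ y) + r (x ∩ y) ≤ r x + r y) :
    ∀ (n : ℕ) (x Y z : Finset α), x ⊆ z → z ⊆ Y → Y.card ≤ z.card + n →
    r z + x.card = r x + z.card →
    ∃ z', z ⊆ z' ∧ z' ⊆ Y ∧ r z' + x.card = r x + z'.card ∧ r z' = r Y := by
  intro n
  induction n with
  | zero =>
    intro x Y z hxz hzY hc hind
    have hzy : z = Y := Finset.eq_of_subset_of_card_le hzY (by omega)
    exact ⟨z, Finset.Subset.refl z, hzY, hind, by rw [hzy]⟩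
  | succ n ih =>
    intro x Y z hxz hzY hc hind
    by_cases hry : r z = r Y
    · exact ⟨z, Finset.Subset.refl z, hzY, hind, hry⟩
    · have hne : ∃ e ∈ Y \ z, r (insert e z) ≠ r z := by
        by_contra hcon
        push_neg at hcon
        have hflat := aux_flat r hr2 hr3 (Y \ z) z (fun e he => hcon e he)
        rw [Finset.union_sdiff_of_subset hzY] at hflat
        exact hry hflat.symm
      obtain ⟨e, heY, hneq⟩ := hne
      obtain ⟨heY1, hez⟩ := Finset.mem_sdiff.mp heY
      have hstep : r (insert e z) = r z + 1 := by
        have h1 := aux_step r hr1 hr3 z e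
        have h2 := hr2 z (insert e z) (Finset.subset_insert e z)
        omega
      have hcard : (insert e z).card = z.card + 1 := Finset.card_insert_of_notMem hez
      obtain ⟨z', h1, h2, h3, h4⟩ := ih x Y (insert e z)
        (hxz.trans (Finset.subset_insert e z))
        (Finset.insert_subset heY1 hzY) (by omega) (by omega)
      exact ⟨z', (Finset.subset_insert e z).trans h1, h2, h3, h4⟩

end Aux

/-- A minor `M([x,y])` of a matroid has exactly one basis if and only if the interval
`[x,y]` is prime-free. -/
theorem minor_unique_basis_iff_primeFree {α : Type*} [Fintype α] [DecidableEq α]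
    (r : Finset α → ℕ)
    (hr1 : ∀ x : Finset α, r x ≤ x.card)
    (hr2 : ∀ x y : Finset α, x ⊆ y → r x ≤ r y)
    (hr3 : ∀ x y : Finset α, r (x ∪ y) + r (x ∩ y) ≤ r x + r y)
    (x y : Finset α) (hxy : x ⊆ y) :
    (∃! z : Finset α, x ⊆ z ∧ z ⊆ y ∧ r z + x.card = r x + z.card ∧ r z = r y) ↔
      ¬∃ a b : Finset α, x ⊆ a ∧ a ⊆ b ∧ b ⊆ y ∧ b.card = a.card + 2 ∧
        ∀ c : Finset α, a ⊂ c → c ⊂ b → (r c = r a + 1 ∧ r b = r c) := by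
  constructor
  · -- unique basis → prime-free
    rintro ⟨z₀, hz₀, huniq⟩ ⟨a, b, hxa, hab, hby, hcard, hdia⟩
    -- extract the two elements of b \ a
    have hba : (b \ a).card = 2 := by
      have := Finset.card_sdiff_add_card_eq_card hab
      omega
    obtain ⟨e, f, hef, hbaef⟩ := Finset.card_eq_two.mp hba
    have heb : e ∈ b ∧ e ∉ a := by
      have : e ∈ b \ a := by rw [hbaef]; simp
      exact Finset.mem_sdiff.mp this
    have hfb : f ∈ b ∧ f ∉ a := by
      have : f ∈ b \ a := by rw [hbaef]; simp
      exact Finset.mem_sdiff.mp this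
    -- the two middle elements of the diamond
    have hc1 : a ⊂ insert e a := Finset.ssubset_insert heb.2
    have hc1b : insert e a ⊂ b := by
      have hsub : insert e a ⊆ b := Finset.insert_subset heb.1 hab
      refine (Finset.ssubset_iff_of_subset hsub).mpr ⟨f, hfb.1, ?_⟩
      simp only [Finset.mem_insert]
      push_neg
      exact ⟨hef.symm, hfb.2⟩
    have hc2 : a ⊂ insert f a := Finset.ssubset_insert hfb.2
    have hc2b : insert f a ⊂ b := by
      have hsub : insert f a ⊆ b := Finset.insert_subset hfb.1 hab
      refine (Finset.ssubset_iff_of_subset hsub).mpr ⟨e, heb.1, ?_⟩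
      simp only [Finset.mem_insert]
      push_neg
      exact ⟨hef, heb.2⟩
    obtain ⟨hd1, hd1'⟩ := hdia (insert e a) hc1 hc1b
    obtain ⟨hd2, hd2'⟩ := hdia (insert f a) hc2 hc2b
    -- maximal independent set i inside [x, a]
    obtain ⟨i, hxi, hia, hiind, hira⟩ := aux_extend r hr1 hr2 hr3 a.card x a x
      (Finset.Subset.refl x) hxa (by omega) (by omega)
    -- insert e i and insert f i are independent
    have hei : e ∉ i := fun h => heb.2 (hia h)
    have hfi : f ∉ i := fun h => hfb.2 (hia h)
    have hje : r (insert e i) = r i + 1 := by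
      have hsub := hr3 a (insert e i)
      have hu : a ∪ insert e i = insert e a := by
        rw [Finset.union_insert, Finset.union_eq_left.mpr hia]
      have hi2 : a ∩ insert e i = i := by
        ext g
        simp only [Finset.mem_inter, Finset.mem_insert]
        constructor
        · rintro ⟨hga, rfl | hgi⟩
          · exact absurd hga heb.2
          · exact hgi
        · intro hg; exact ⟨hia hg, Or.inr hg⟩
      rw [hu, hi2] at hsub
      have hle := aux_step r hr1 hr3 i e
      omega
    have hjf : r (insert f i) = r i + 1 := by
      have hsub := hr3 a (insert f i)
      have hu : a ∪ insert f i = insert f a := by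
        rw [Finset.union_insert, Finset.union_eq_left.mpr hia]
      have hi2 : a ∩ insert f i = i := by
        ext g
        simp only [Finset.mem_inter, Finset.mem_insert]
        constructor
        · rintro ⟨hga, rfl | hgi⟩
          · exact absurd hga hfb.2
          · exact hgi
        · intro hg; exact ⟨hia hg, Or.inr hg⟩
      rw [hu, hi2] at hsub
      have hle := aux_step r hr1 hr3 i f
      omega
    have hiy : i ⊆ y := hia.trans (hab.trans hby)
    have heiy : insert e i ⊆ y := Finset.insert_subset (hby heb.1) hiy
    have hfiy : insert f i ⊆ y := Finset.insert_subset (hby hfb.1) hiy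
    have hcei : (insert e i).card = i.card + 1 := Finset.card_insert_of_notMem hei
    have hcfi : (insert f i).card = i.card + 1 := Finset.card_insert_of_notMem hfi
    -- extend both to bases
    obtain ⟨z₁, hj1z₁, hz₁y, hz₁ind, hz₁r⟩ := aux_extend r hr1 hr2 hr3 y.card x y (insert e i)
      (hxi.trans (Finset.subset_insert e i)) heiy (by omega) (by omega)
    obtain ⟨z₂, hj2z₂, hz₂y, hz₂ind, hz₂r⟩ := aux_extend r hr1 hr2 hr3 y.card x y (insert f i)
      (hxi.trans (Finset.subset_insert f i)) hfiy (by omega) (by omega)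
    have he₁ : z₁ = z₀ := huniq z₁ ⟨hxi.trans ((Finset.subset_insert e i).trans hj1z₁),
      hz₁y, hz₁ind, hz₁r⟩
    have he₂ : z₂ = z₀ := huniq z₂ ⟨hxi.trans ((Finset.subset_insert f i).trans hj2z₂),
      hz₂y, hz₂ind, hz₂r⟩
    -- the set w = i ∪ {e, f} is contained in the common basis, hence independent
    set w : Finset α := insert e (insert f i) with hw
    have hwz₀ : w ⊆ z₀ := by
      rw [hw]
      refine Finset.insert_subset ?_ (Finset.insert_subset ?_ ?_)
      · exact he₁ ▸ hj1z₁ (Finset.mem_insert_self e i)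
      · exact he₂ ▸ hj2z₂ (Finset.mem_insert_self f i)
      · exact fun g hg => he₁ ▸ hj1z₁ (Finset.mem_insert_of_mem hg)
    have hxw : x ⊆ w := hxi.trans ((Finset.subset_insert f i).trans (Finset.subset_insert e _))
    have hwind : r w + x.card = r x + w.card :=
      aux_subset_ind r hr1 hr3 x w z₀ hxw hwz₀ hz₀.2.2.1
    have hwcard : w.card = i.card + 2 := by
      rw [hw, Finset.card_insert_of_notMem (by
        simp only [Finset.mem_insert]; push_neg; exact ⟨hef, hei⟩), hcfi]
    have hwb : w ⊆ b := by
      rw [hw]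
      exact Finset.insert_subset heb.1 (Finset.insert_subset hfb.1 (hia.trans hab))
    have hwle : r w ≤ r b := hr2 _ _ hwb
    omega
  · -- prime-free → unique basis
    intro hpf
    obtain ⟨z₀, hxz₀, hz₀y, hz₀ind, hz₀r⟩ := aux_extend r hr1 hr2 hr3 y.card x y x
      (Finset.Subset.refl x) hxy (by omega) (by omega)
    refine ⟨z₀, ⟨hxz₀, hz₀y, hz₀ind, hz₀r⟩, ?_⟩
    rintro z' ⟨hxz', hz'y, hz'ind, hz'r⟩
    by_contra hne
    -- z' and z₀ have the same cardinality
    have hcardeq : z'.card = z₀.card := by omega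
    -- find e ∈ z₀ \ z'
    have hex : ∃ e ∈ z₀, e ∉ z' := by
      by_contra hcon
      push_neg at hcon
      exact hne (Finset.eq_of_subset_of_card_le hcon (by omega)).symm
    obtain ⟨e, hez₀, hez'⟩ := hex
    set a := z₀.erase e with ha
    have hxa : x ⊆ a := Finset.subset_erase.mpr ⟨hxz₀, fun h => hez' (hxz' h)⟩
    have haz₀ : a ⊆ z₀ := Finset.erase_subset e z₀
    have haind : r a + x.card = r x + a.card :=
      aux_subset_ind r hr1 hr3 x a z₀ hxa haz₀ hz₀ind
    have hacard : a.card + 1 = z₀.card := Finset.card_erase_add_one hez₀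
    have hra : r a + 1 = r y := by omega
    -- find f ∈ z' with r (insert f a) = r a + 1
    have hexf : ∃ f ∈ z', r (insert f a) ≠ r a := by
      by_contra hcon
      push_neg at hcon
      have hflat := aux_flat r hr2 hr3 z' a hcon
      have hmono : r z' ≤ r (a ∪ z') := hr2 _ _ Finset.subset_union_right
      omega
    obtain ⟨f, hfz', hfneq⟩ := hexf
    have hrf : r (insert f a) = r a + 1 := by
      have h1 := aux_step r hr1 hr3 a f
      have h2 := hr2 a (insert f a) (Finset.subset_insert f a)
      omega
    have hfa : f ∉ a := by
      intro h
      exact hfneq (by rw [Finset.insert_eq_self.mpr h])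
    have hfe : f ≠ e := fun h => hez' (h ▸ hfz')
    have hfz₀ : f ∉ z₀ := by
      intro h
      exact hfa (Finset.mem_erase.mpr ⟨hfe, h⟩)
    have hz₀a : insert e a = z₀ := Finset.insert_erase hez₀
    -- build the prime diamond
    apply hpf
    refine ⟨a, insert f z₀, hxa, haz₀.trans (Finset.subset_insert f z₀),
      Finset.insert_subset (hz'y hfz') hz₀y, ?_, ?_⟩
    · rw [Finset.card_insert_of_notMem hfz₀]; omega
    · intro c hac hcb
      have hbcard : (insert f z₀).card = a.card + 2 := by
        rw [Finset.card_insert_of_notMem hfz₀]; omega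
      have hccard : c.card = a.card + 1 := by
        have h1 := Finset.card_lt_card hac
        have h2 := Finset.card_lt_card hcb
        omega
      have hca : (c \ a).card = 1 := by
        have := Finset.card_sdiff_add_card_eq_card hac.subset
        omega
      obtain ⟨g, hg⟩ := Finset.card_eq_one.mp hca
      have hcg : c = insert g a := by
        have h1 := Finset.union_sdiff_of_subset hac.subset
        rw [hg] at h1
        rw [← h1, Finset.union_comm, ← Finset.insert_eq]
      have hgmem : g ∈ c \ a := by rw [hg]; simp
      obtain ⟨hgc, hga⟩ := Finset.mem_sdiff.mp hgmem
      have hgb : g ∈ insert f z₀ := hcb.subset hgc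
      have hrb : r (insert f z₀) = r y := by
        have h1 : r z₀ ≤ r (insert f z₀) := hr2 _ _ (Finset.subset_insert f z₀)
        have h2 : r (insert f z₀) ≤ r y :=
          hr2 _ _ (Finset.insert_subset (hz'y hfz') hz₀y)
        omega
      rcases Finset.mem_insert.mp hgb with rfl | hgz₀
      · -- g = f
        rw [hcg]
        exact ⟨hrf, by omega⟩
      · -- g ∈ z₀, and g ∉ a means g = e
        have hge : g = e := by
          by_contra hgne
          exact hga (Finset.mem_erase.mpr ⟨hgne, hgz₀⟩)
        subst hge
        rw [hcg, hz₀a]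
        exact ⟨by omega, by omega⟩
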